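/- arXiv:1507.05844 — 6 statements merged into one kernel-verified Lean document; each statement's English description precedes it below -/
import Mathlib

section
/- For any positive definite n×n matrix A, vector b, and any x, x° with Ax° = b, if x⁺ = x + ((b_i − (Ax)_i)/A_{ii}) e_i for a coordinate index i, then ‖x⁺ − x°‖²_A = ‖x − x°‖²_A − ‖x⁺ − x‖²_A, where ‖z‖²_A = z*Az. -/
open Matrix

/-- Pythagorean identity for one coordinate-descent step on a positive definite
system Ax = b:  ‖x⁺ − x°‖²_A = ‖x − x°‖²_A − ‖x⁺ − x‖²_A. -/
theorem coordinate_descent_pythagoras {n : ℕ} (A : Matrix (Fin n) (Fin n) ℝ)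
    (hA : A.PosDef) (b x x0 : Fin n → ℝ) (hx0 : A.mulVec x0 = b) (i : Fin n)
    (xp : Fin n → ℝ)
    (hxp : xp = x + ((b i - A.mulVec x i) / A i i) • (Pi.single i 1 : Fin n → ℝ)) :
    (xp - x0) ⬝ᵥ A.mulVec (xp - x0) =
      (x - x0) ⬝ᵥ A.mulVec (x - x0) - (xp - x) ⬝ᵥ A.mulVec (xp - x) := by
  have hsym : ∀ j k, A j k = A k j := fun j k => by
    have := hA.1; rw [Matrix.IsHermitian] at this
    simpa using congrFun (congrFun this k) j
  -- diagonal entry positive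
  have hii : 0 < A i i := by
    have h := hA.dotProduct_mulVec_pos (x := Pi.single i 1) (by
      intro h
      have := congrFun h i
      simp at this)
    simpa [dotProduct, Matrix.mulVec, Pi.single_apply, Finset.mul_sum] using h
  set c : ℝ := (b i - A.mulVec x i) / A i i with hc
  have hd : xp - x = c • (Pi.single i 1 : Fin n → ℝ) := by
    rw [hxp]; abel
  have hud : xp - x0 = (x - x0) + c • (Pi.single i 1 : Fin n → ℝ) := by
    rw [hxp]; abel
  set u : Fin n → ℝ := x - x0 with hu
  set s : Fin n → ℝ := (Pi.single i 1 : Fin n → ℝ) with hs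
  -- cross terms
  have hAu : A.mulVec u i = A.mulVec x i - b i := by
    rw [hu, Matrix.mulVec_sub, hx0]; simp
  have h1 : (c • s) ⬝ᵥ A.mulVec u = c * (A.mulVec x i - b i) := by
    rw [hs, smul_dotProduct, single_dotProduct]
    rw [hAu]; simp only [smul_eq_mul]; ring
  have h2 : u ⬝ᵥ A.mulVec (c • s) = c * (A.mulVec x i - b i) := by
    rw [Matrix.mulVec_smul, dotProduct_smul, hs, Matrix.mulVec_single_one]
    have : u ⬝ᵥ A.col i = A.mulVec u i := by
      simp [dotProduct, Matrix.mulVec, mul_comm, hsym i]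
    rw [this, hAu]; simp only [smul_eq_mul]
  have h3 : (c • s) ⬝ᵥ A.mulVec (c • s) = c * c * A i i := by
    rw [Matrix.mulVec_smul, dotProduct_smul, hs, smul_dotProduct,
      single_dotProduct, Matrix.mulVec_single_one]
    simp only [smul_eq_mul, mul_one, Matrix.col_apply]; ring
  have hkey : c * A i i = b i - A.mulVec x i := by
    rw [hc, div_mul_cancel₀ _ (ne_of_gt hii)]
  have h4 : c * c * A i i = c * (b i - A.mulVec x i) := by rw [mul_assoc, hkey]
  rw [hud, hd, Matrix.mulVec_add, add_dotProduct, dotProduct_add,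
    dotProduct_add, h1, h2, h3]
  linear_combination 2 * h4
end

section
/- For a positive definite matrix A with coordinate descent update x⁺ = x + ((b_i − (Ax)_i)/A_{ii}) e_i where index i is chosen with probability A_{ii}/Tr(A), the conditional expected squared A-norm step satisfies E‖x⁺ − x‖²_A = ‖b − Ax‖²/Tr(A). -/
open Matrix

/-- Expected squared A-norm of the coordinate descent step, with coordinate i
chosen with probability A_{ii}/Tr(A):  E‖x⁺ − x‖²_A = ‖b − Ax‖²/Tr(A). -/
theorem coordinate_descent_expected_step {n : ℕ} (A : Matrix (Fin n) (Fin n) ℝ)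
    (hA : A.PosDef) (b x : Fin n → ℝ) (xp : Fin n → Fin n → ℝ)
    (hxp : ∀ i, xp i = x + ((b i - A.mulVec x i) / A i i) • (Pi.single i 1 : Fin n → ℝ)) :
    ∑ i, (A i i / A.trace) * ((xp i - x) ⬝ᵥ A.mulVec (xp i - x)) =
      (∑ i, (b i - A.mulVec x i) ^ 2) / A.trace := by
  have hd : ∀ i, 0 < A i i := fun i => hA.dotProduct_mulVec_pos (x := Pi.single i 1) (by
    intro h; simpa using congrFun h i) |>.trans_eq (by
      simp [dotProduct, mulVec, Pi.single_apply, Finset.sum_ite_eq, mul_comm])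
  rw [Finset.sum_div]
  refine Finset.sum_congr rfl fun i _ => ?_
  have hq : (xp i - x) ⬝ᵥ A.mulVec (xp i - x)
      = ((b i - A.mulVec x i) / A i i)^2 * A i i := by
    rw [hxp i, add_sub_cancel_left]
    simp [mulVec, dotProduct, Pi.single_apply, Finset.mul_sum, mul_comm, mul_assoc, sq, Finset.sum_ite_eq]
    ring
  have htr : 0 < A.trace :=
    Finset.sum_pos (fun j _ => hd j) ⟨i, Finset.mem_univ i⟩
  rw [hq]
  field_simp [(hd i).ne']
end

section
/- One step of randomized coordinate descent on the positive definite system Ax = b (with Ax° = b, coordinate i chosen with probability A_{ii}/Tr(A), update x⁺ = x + ((b_i − (Ax)_i)/A_{ii}) e_i) satisfies E‖x⁺ − x°‖²_A ≤ (1 − σ_min(A)/Tr(A))‖x − x°‖²_A. -/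
open Matrix

lemma diag_quad {n : ℕ} (d y : Fin n → ℝ) :
    y ⬝ᵥ (Matrix.diagonal d) *ᵥ y = ∑ j, d j * y j ^ 2 := by
  simp [dotProduct, mulVec_diagonal]
  congr 1; ext j; ring

lemma key_spec_ineq {n : ℕ} (A : Matrix (Fin n) (Fin n) ℝ) (hA : A.PosDef)
    (σmin : ℝ) (hσ : IsLeast (spectrum ℝ A) σmin) (r : Fin n → ℝ) :
    σmin * (r ⬝ᵥ A *ᵥ r) ≤ (A *ᵥ r) ⬝ᵥ (A *ᵥ r) := by
  have hH := hA.1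
  set U : Matrix (Fin n) (Fin n) ℝ := (hH.eigenvectorUnitary : Matrix (Fin n) (Fin n) ℝ) with hU
  set μ : Fin n → ℝ := hH.eigenvalues with hμ
  have hspec : A = U * Matrix.diagonal μ * star U := by
    have := hH.spectral_theorem
    simpa [RCLike.ofReal_real_eq_id] using this
  have hsU : star U = Uᵀ := (U.conjTranspose_eq_transpose_of_trivial)
  set y : Fin n → ℝ := Uᵀ *ᵥ r with hy
  have hAr : A *ᵥ r = U *ᵥ (Matrix.diagonal μ *ᵥ y) := by
    rw [hspec, hsU, ← mulVec_mulVec, ← mulVec_mulVec]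
  have hUU : Uᵀ * U = 1 := by
    rw [← hsU]; exact (Matrix.mem_unitaryGroup_iff').mp hH.eigenvectorUnitary.2
  have h1 : r ⬝ᵥ A *ᵥ r = ∑ j, μ j * y j ^ 2 := by
    rw [hAr, dotProduct_mulVec, ← mulVec_transpose, ← hy, diag_quad]
  have h2 : (A *ᵥ r) ⬝ᵥ (A *ᵥ r) = ∑ j, μ j ^ 2 * y j ^ 2 := by
    rw [hAr, dotProduct_mulVec, ← mulVec_transpose, mulVec_mulVec, hUU, one_mulVec]
    simp [dotProduct, mulVec_diagonal]
    congr 1; ext j; ring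
  rw [h1, h2, Finset.mul_sum]
  apply Finset.sum_le_sum
  intro j _
  have h3 : σmin ≤ μ j := hσ.2 (hH.eigenvalues_mem_spectrum_real j)
  have h4 : 0 < μ j := hA.eigenvalues_pos j
  nlinarith [mul_nonneg (mul_nonneg (sub_nonneg.2 h3) h4.le) (sq_nonneg (y j))]

/-- One step of randomized coordinate descent on a positive definite system Ax = b
contracts the A-norm error in expectation by the factor (1 − σ_min(A)/Tr(A)). -/
theorem coordinate_descent_one_step_contraction {n : ℕ} (A : Matrix (Fin n) (Fin n) ℝ)
    (hA : A.PosDef) (b x x0 : Fin n → ℝ) (hx0 : A.mulVec x0 = b)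
    (σmin : ℝ) (hσ : IsLeast (spectrum ℝ A) σmin)
    (xp : Fin n → Fin n → ℝ)
    (hxp : ∀ i, xp i = x + ((b i - A.mulVec x i) / A i i) • (Pi.single i 1 : Fin n → ℝ)) :
    ∑ i, (A i i / A.trace) * ((xp i - x0) ⬝ᵥ A.mulVec (xp i - x0)) ≤
      (1 - σmin / A.trace) * ((x - x0) ⬝ᵥ A.mulVec (x - x0)) := by
  rcases Nat.eq_zero_or_pos n with hn | hn
  · subst hn
    simp [dotProduct]
  -- setup
  set r : Fin n → ℝ := x - x0 with hr
  set g : Fin n → ℝ := A *ᵥ r with hg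
  have hdiag : ∀ i, 0 < A i i := by
    intro i
    have hne : (Pi.single i 1 : Fin n → ℝ) ≠ 0 := by
      intro h
      have h2 := congrFun h i
      rw [Pi.single_eq_same] at h2
      exact one_ne_zero h2
    have h := hA.re_dotProduct_pos (x := (Pi.single i 1 : Fin n → ℝ)) hne
    simpa [single_dotProduct, mulVec_single] using h
  have hT : 0 < A.trace := by
    have : A.trace = ∑ i, A i i := by simp [Matrix.trace, Matrix.diag]
    rw [this]
    exact Finset.sum_pos (fun i _ => hdiag i) (by simpa [Finset.univ_nonempty_iff] using
      (Fin.pos_iff_nonempty.mp hn))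
  set T := A.trace with hTdef
  -- residual identity
  have hres : ∀ i, b i - A.mulVec x i = -(g i) := by
    intro i
    have : A.mulVec x - A.mulVec x0 = g := by rw [hg, hr, ← Matrix.mulVec_sub]
    have := congrFun this i
    simp only [Pi.sub_apply] at this
    rw [← hx0]
    linarith
  -- error after update
  have hxe : ∀ i, xp i - x0 = r - (g i / A i i) • (Pi.single i 1 : Fin n → ℝ) := by
    intro i
    rw [hxp i, hres i, hr]
    ext j
    simp [neg_div]
    ring
  set S : ℝ := r ⬝ᵥ A *ᵥ r with hS
  -- quadratic expansion
  have hQ : ∀ i, (xp i - x0) ⬝ᵥ A.mulVec (xp i - x0) = S - g i ^ 2 / A i i := by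
    intro i
    rw [hxe i]
    set c := g i / A i i with hc
    have e1 : A *ᵥ (r - c • (Pi.single i 1 : Fin n → ℝ))
        = A *ᵥ r - c • (A *ᵥ (Pi.single i 1 : Fin n → ℝ)) := by
      rw [Matrix.mulVec_sub, Matrix.mulVec_smul]
    rw [show A.mulVec (r - c • (Pi.single i 1 : Fin n → ℝ))
        = A *ᵥ (r - c • (Pi.single i 1 : Fin n → ℝ)) from rfl, e1]
    rw [sub_dotProduct, smul_dotProduct, dotProduct_sub, dotProduct_sub,
      dotProduct_smul, dotProduct_smul]
    have p1 : r ⬝ᵥ (A *ᵥ (Pi.single i 1 : Fin n → ℝ)) = g i := by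
      rw [dotProduct_mulVec, dotProduct_single, mul_one, ← mulVec_transpose]
      have : Aᵀ = A := by
        have := hA.1
        rw [Matrix.IsHermitian, conjTranspose_eq_transpose_of_trivial] at this
        exact this
      rw [this, ← hg]
    have p2 : (Pi.single i 1 : Fin n → ℝ) ⬝ᵥ (A *ᵥ r) = g i := by
      rw [← hg, single_dotProduct, one_mul]
    have p3 : (Pi.single i 1 : Fin n → ℝ) ⬝ᵥ (A *ᵥ (Pi.single i 1 : Fin n → ℝ)) = A i i := by
      simp [single_dotProduct, mulVec_single]
    rw [p1, p2, p3, ← hS]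
    have hAii := (hdiag i).ne'
    field_simp [hc]
    have hcA : g i / A i i * A i i = g i := div_mul_cancel₀ _ hAii
    rw [hc]; simp only [smul_eq_mul]
    linear_combination (g i / A i i * A i i - g i) * hcA
  -- sum up
  have hsum : ∑ i, (A i i / T) * ((xp i - x0) ⬝ᵥ A.mulVec (xp i - x0))
      = S - (∑ i, g i ^ 2) / T := by
    have h1 : ∀ i, (A i i / T) * (S - g i ^ 2 / A i i) = A i i * S / T - g i ^ 2 / T := by
      intro i
      have hAii := (hdiag i).ne'
      field_simp
    calc ∑ i, (A i i / T) * ((xp i - x0) ⬝ᵥ A.mulVec (xp i - x0))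
        = ∑ i, (A i i * S / T - g i ^ 2 / T) := by
          apply Finset.sum_congr rfl; intro i _; rw [hQ i, h1 i]
      _ = (∑ i, A i i) * S / T - (∑ i, g i ^ 2) / T := by
          rw [Finset.sum_sub_distrib, ← Finset.sum_div, ← Finset.sum_div, ← Finset.sum_mul]
      _ = S - (∑ i, g i ^ 2) / T := by
          have : (∑ i, A i i) = T := by simp [hTdef, Matrix.trace, Matrix.diag]
          rw [this]
          field_simp
  rw [hsum]
  have hgg : (∑ i, g i ^ 2) = g ⬝ᵥ g := by
    simp [dotProduct, sq]
  have hkey : σmin * S ≤ g ⬝ᵥ g := key_spec_ineq A hA σmin hσ r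
  rw [hgg]
  have heq : (1 - σmin / T) * S = S - σmin * S / T := by ring
  rw [heq]
  have hdd : σmin * S / T ≤ g ⬝ᵥ g / T := by gcongr
  linarith
end

section
/- Randomized Gauss–Seidel for ridge regression with m > n converges linearly: E‖β_t − β°‖²_{X*X+λI} ≤ (1 − (σ_1² + λ)/(Σ_i σ_i² + nλ))^t ‖β_0 − β°‖²_{X*X+λI}, where σ_1 is the smallest singular value of X. -/
open Matrix

/-- One step of randomized Gauss–Seidel for ridge regression: update coordinate j. -/
noncomputable def rgsUpdate {m n : ℕ} (X : Matrix (Fin m) (Fin n) ℝ) (y : Fin m → ℝ)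
    (lam : ℝ) (j : Fin n) (β : Fin n → ℝ) : Fin n → ℝ :=
  Function.update β j
    (β j + ((Xᵀ.mulVec (y - X.mulVec β)) j - lam * β j) / ((∑ i, (X i j) ^ 2) + lam))

/-- Iterate RGS along a given sequence of column choices. -/
noncomputable def rgsIter {m n : ℕ} (X : Matrix (Fin m) (Fin n) ℝ) (y : Fin m → ℝ)
    (lam : ℝ) : List (Fin n) → (Fin n → ℝ) → Fin n → ℝ
  | [], β => β
  | j :: js, β => rgsIter X y lam js (rgsUpdate X y lam j β)

section RGSAux

variable {m n : ℕ}

private lemma rgs_dotSelf_nonneg (v : Fin m → ℝ) : 0 ≤ v ⬝ᵥ v :=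
  Finset.sum_nonneg fun _ _ => mul_self_nonneg _

private lemma rgs_quad_eq (X : Matrix (Fin m) (Fin n) ℝ) (lam : ℝ) (z : Fin n → ℝ) :
    z ⬝ᵥ (Xᵀ * X + lam • (1 : Matrix (Fin n) (Fin n) ℝ)) *ᵥ z
      = (X *ᵥ z) ⬝ᵥ (X *ᵥ z) + lam * (z ⬝ᵥ z) := by
  rw [add_mulVec, dotProduct_add, smul_mulVec, one_mulVec, dotProduct_smul,
    ← mulVec_mulVec, dotProduct_mulVec, vecMul_transpose, smul_eq_mul]

private lemma rgs_quad_nonneg (X : Matrix (Fin m) (Fin n) ℝ) (lam : ℝ) (hlam : 0 ≤ lam)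
    (z : Fin n → ℝ) :
    0 ≤ z ⬝ᵥ (Xᵀ * X + lam • (1 : Matrix (Fin n) (Fin n) ℝ)) *ᵥ z := by
  rw [rgs_quad_eq]
  have h1 := rgs_dotSelf_nonneg (X *ᵥ z)
  have h2 := rgs_dotSelf_nonneg z
  nlinarith

private lemma rgs_quad_sub_single (A : Matrix (Fin n) (Fin n) ℝ) (hA : Aᵀ = A) (e : Fin n → ℝ)
    (c : ℝ) (j : Fin n) :
    (e - c • (Pi.single j 1 : Fin n → ℝ)) ⬝ᵥ A *ᵥ (e - c • (Pi.single j 1 : Fin n → ℝ))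
      = e ⬝ᵥ A *ᵥ e - 2 * c * (A *ᵥ e) j + c ^ 2 * A j j := by
  have hsym : e ⬝ᵥ A *ᵥ Pi.single j 1 = (A *ᵥ e) j := by
    rw [dotProduct_mulVec, ← mulVec_transpose, hA, dotProduct_single, mul_one]
  have h1 : Pi.single j (1:ℝ) ⬝ᵥ A *ᵥ e = (A *ᵥ e) j := by
    rw [single_dotProduct, one_mul]
  have h2 : Pi.single j (1:ℝ) ⬝ᵥ A *ᵥ Pi.single j 1 = A j j := by
    simp [single_dotProduct, mulVec_single]
  rw [mulVec_sub, mulVec_smul, dotProduct_sub, sub_dotProduct, sub_dotProduct,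
    dotProduct_smul, smul_dotProduct, smul_dotProduct, dotProduct_smul]
  simp only [smul_eq_mul, hsym, h1, h2]
  ring

private lemma rgs_quad_bound (B : Matrix (Fin n) (Fin n) ℝ) (hB : B.IsHermitian) (lam c : ℝ)
    (hc0 : 0 ≤ c) (hc : ∀ i, c ≤ hB.eigenvalues i + lam) (e : Fin n → ℝ) :
    c * (e ⬝ᵥ (B + lam • (1 : Matrix (Fin n) (Fin n) ℝ)) *ᵥ e)
      ≤ ((B + lam • (1 : Matrix (Fin n) (Fin n) ℝ)) *ᵥ e)
        ⬝ᵥ ((B + lam • (1 : Matrix (Fin n) (Fin n) ℝ)) *ᵥ e) := by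
  classical
  set U : Matrix (Fin n) (Fin n) ℝ := (hB.eigenvectorUnitary : Matrix (Fin n) (Fin n) ℝ)
    with hUdef
  have hU1 : star U * U = 1 := mem_unitaryGroup_iff'.mp hB.eigenvectorUnitary.2
  have hU2 : U * star U = 1 := mem_unitaryGroup_iff.mp hB.eigenvectorUnitary.2
  have hspec : B = U * diagonal hB.eigenvalues * star U := by
    have h := hB.spectral_theorem
    rwa [RCLike.ofReal_real_eq_id, Function.id_comp] at h
  have hA : B + lam • (1 : Matrix (Fin n) (Fin n) ℝ)
      = U * diagonal (fun i => hB.eigenvalues i + lam) * star U := by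
    have h1 : diagonal (fun i => hB.eigenvalues i + lam)
        = diagonal hB.eigenvalues + lam • (1 : Matrix (Fin n) (Fin n) ℝ) := by
      rw [smul_one_eq_diagonal, diagonal_add]
    rw [h1, mul_add, add_mul, ← hspec]
    congr 1
    rw [Matrix.mul_smul, mul_one, Matrix.smul_mul, hU2]
  have hsU : star U = Uᵀ := by
    rw [star_eq_conjTranspose, conjTranspose_eq_transpose_of_trivial]
  set w := star U *ᵥ e with hw
  have he1 : e ⬝ᵥ (B + lam • (1 : Matrix (Fin n) (Fin n) ℝ)) *ᵥ e
      = ∑ i, (hB.eigenvalues i + lam) * w i ^ 2 := by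
    rw [hA, ← mulVec_mulVec, ← mulVec_mulVec, dotProduct_mulVec]
    have h2 : e ᵥ* U = w := by rw [hw, hsU, mulVec_transpose]
    rw [h2]
    simp only [dotProduct, mulVec_diagonal]
    exact Finset.sum_congr rfl fun i _ => by ring
  have he2 : ((B + lam • (1 : Matrix (Fin n) (Fin n) ℝ)) *ᵥ e)
        ⬝ᵥ ((B + lam • (1 : Matrix (Fin n) (Fin n) ℝ)) *ᵥ e)
      = ∑ i, ((hB.eigenvalues i + lam) * w i) ^ 2 := by
    rw [hA, ← mulVec_mulVec, ← mulVec_mulVec]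
    set a := diagonal (fun i => hB.eigenvalues i + lam) *ᵥ w with ha
    have h3 : (U *ᵥ a) ⬝ᵥ (U *ᵥ a) = a ⬝ᵥ a := by
      rw [dotProduct_mulVec]
      have h4 : (U *ᵥ a) ᵥ* U = a := by
        rw [← mulVec_transpose, ← hsU, mulVec_mulVec, hU1, one_mulVec]
      rw [h4]
    rw [h3]
    simp only [ha, dotProduct, mulVec_diagonal]
    exact Finset.sum_congr rfl fun i _ => by ring
  rw [he1, he2, Finset.mul_sum]
  apply Finset.sum_le_sum
  intro i _
  have h5 := hc i
  nlinarith [mul_nonneg (mul_nonneg (sub_nonneg.2 h5) (le_trans hc0 h5)) (sq_nonneg (w i))]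

private lemma rgs_sum_eigenvalues_eq (B : Matrix (Fin n) (Fin n) ℝ) (hB : B.IsHermitian) :
    ∑ i, hB.eigenvalues i = ∑ j, B j j := by
  classical
  set U : Matrix (Fin n) (Fin n) ℝ := (hB.eigenvectorUnitary : Matrix (Fin n) (Fin n) ℝ)
    with hUdef
  have hU1 : star U * U = 1 := mem_unitaryGroup_iff'.mp hB.eigenvectorUnitary.2
  have hspec : B = U * diagonal hB.eigenvalues * star U := by
    have h := hB.spectral_theorem
    rwa [RCLike.ofReal_real_eq_id, Function.id_comp] at h
  have h : B.trace = ∑ i, hB.eigenvalues i := by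
    conv_lhs => rw [hspec]
    rw [trace_mul_comm, ← mul_assoc, hU1, one_mul, trace_diagonal]
  rw [← h]
  simp [Matrix.trace, Matrix.diag]

private lemma rgs_sum_fn_succ {α M : Type*} [Fintype α] [DecidableEq α] [AddCommMonoid M]
    (t : ℕ) (f : (Fin (t + 1) → α) → M) :
    ∑ js : Fin (t + 1) → α, f js = ∑ j : α, ∑ js : Fin t → α, f (Fin.cons j js) := by
  calc ∑ js : Fin (t + 1) → α, f js
      = ∑ p : α × (Fin t → α), f (Fin.consEquiv (fun _ => α) p) :=
        (Equiv.sum_comp (Fin.consEquiv fun _ => α) f).symm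
    _ = ∑ j : α, ∑ js : Fin t → α, f (Fin.consEquiv (fun _ => α) (j, js)) :=
        Fintype.sum_prod_type (fun p : α × (Fin t → α) => f (Fin.consEquiv (fun _ => α) p))
    _ = ∑ j : α, ∑ js : Fin t → α, f (Fin.cons j js) := rfl

private lemma rgs_main (X : Matrix (Fin m) (Fin n) ℝ) (y : Fin m → ℝ) (lam : ℝ)
    (βo : Fin n → ℝ) (T q : ℝ)
    (hp : ∀ j : Fin n, 0 ≤ ((∑ i, (X i j) ^ 2) + lam) / T)
    (hq : 0 ≤ q)
    (hexp : ∀ β : Fin n → ℝ,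
      ∑ j, (((∑ i, (X i j) ^ 2) + lam) / T) *
          ((rgsUpdate X y lam j β - βo) ⬝ᵥ
            (Xᵀ * X + lam • (1 : Matrix (Fin n) (Fin n) ℝ)).mulVec (rgsUpdate X y lam j β - βo))
        ≤ q * ((β - βo) ⬝ᵥ
            (Xᵀ * X + lam • (1 : Matrix (Fin n) (Fin n) ℝ)).mulVec (β - βo)))
    (β0 : Fin n → ℝ) (t : ℕ) :
    ∑ js : Fin t → Fin n,
        (∏ s, (((∑ i, (X i (js s)) ^ 2) + lam) / T)) *
          ((rgsIter X y lam (List.ofFn js) β0 - βo) ⬝ᵥ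
            (Xᵀ * X + lam • (1 : Matrix (Fin n) (Fin n) ℝ)).mulVec
              (rgsIter X y lam (List.ofFn js) β0 - βo)) ≤
      q ^ t *
        ((β0 - βo) ⬝ᵥ
          (Xᵀ * X + lam • (1 : Matrix (Fin n) (Fin n) ℝ)).mulVec (β0 - βo)) := by
  induction t generalizing β0 with
  | zero =>
      have h0 : ∀ js : Fin 0 → Fin n, List.ofFn js = [] := fun js => by simp
      simp [h0, rgsIter]
  | succ t ih =>
      rw [rgs_sum_fn_succ]
      have hlist : ∀ (j : Fin n) (js : Fin t → Fin n),
          List.ofFn (Fin.cons j js : Fin (t + 1) → Fin n) = j :: List.ofFn js := by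
        intro j js
        simp [List.ofFn_succ]
      have hiter : ∀ (l : List (Fin n)) (j : Fin n) (β : Fin n → ℝ),
          rgsIter X y lam (j :: l) β = rgsIter X y lam l (rgsUpdate X y lam j β) :=
        fun _ _ _ => rfl
      have hprod : ∀ (j : Fin n) (js : Fin t → Fin n),
          (∏ s : Fin (t + 1),
              (((∑ i, (X i ((Fin.cons j js : Fin (t + 1) → Fin n) s)) ^ 2) + lam) / T))
            = (((∑ i, (X i j) ^ 2) + lam) / T) *
              ∏ s : Fin t, (((∑ i, (X i (js s)) ^ 2) + lam) / T) := by
        intro j js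
        rw [Fin.prod_univ_succ]
        simp
      calc
        ∑ j : Fin n, ∑ js : Fin t → Fin n,
            (∏ s, (((∑ i, (X i ((Fin.cons j js : Fin (t + 1) → Fin n) s)) ^ 2) + lam) / T)) *
              ((rgsIter X y lam (List.ofFn (Fin.cons j js)) β0 - βo) ⬝ᵥ
                (Xᵀ * X + lam • (1 : Matrix (Fin n) (Fin n) ℝ)).mulVec
                  (rgsIter X y lam (List.ofFn (Fin.cons j js)) β0 - βo))
          = ∑ j : Fin n, (((∑ i, (X i j) ^ 2) + lam) / T) *
              ∑ js : Fin t → Fin n,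
                (∏ s, (((∑ i, (X i (js s)) ^ 2) + lam) / T)) *
                  ((rgsIter X y lam (List.ofFn js) (rgsUpdate X y lam j β0) - βo) ⬝ᵥ
                    (Xᵀ * X + lam • (1 : Matrix (Fin n) (Fin n) ℝ)).mulVec
                      (rgsIter X y lam (List.ofFn js) (rgsUpdate X y lam j β0) - βo)) := by
            refine Finset.sum_congr rfl fun j _ => ?_
            rw [Finset.mul_sum]
            refine Finset.sum_congr rfl fun js _ => ?_
            rw [hlist, hiter, hprod]
            ring
        _ ≤ ∑ j : Fin n, (((∑ i, (X i j) ^ 2) + lam) / T) *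
              (q ^ t * ((rgsUpdate X y lam j β0 - βo) ⬝ᵥ
                (Xᵀ * X + lam • (1 : Matrix (Fin n) (Fin n) ℝ)).mulVec
                  (rgsUpdate X y lam j β0 - βo))) := by
            refine Finset.sum_le_sum fun j _ => ?_
            exact mul_le_mul_of_nonneg_left (ih (rgsUpdate X y lam j β0)) (hp j)
        _ = q ^ t * ∑ j : Fin n, (((∑ i, (X i j) ^ 2) + lam) / T) *
              ((rgsUpdate X y lam j β0 - βo) ⬝ᵥ
                (Xᵀ * X + lam • (1 : Matrix (Fin n) (Fin n) ℝ)).mulVec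
                  (rgsUpdate X y lam j β0 - βo)) := by
            rw [Finset.mul_sum]
            exact Finset.sum_congr rfl fun j _ => by ring
        _ ≤ q ^ t * (q * ((β0 - βo) ⬝ᵥ
              (Xᵀ * X + lam • (1 : Matrix (Fin n) (Fin n) ℝ)).mulVec (β0 - βo))) :=
            mul_le_mul_of_nonneg_left (hexp β0) (pow_nonneg hq t)
        _ = q ^ (t + 1) * ((β0 - βo) ⬝ᵥ
              (Xᵀ * X + lam • (1 : Matrix (Fin n) (Fin n) ℝ)).mulVec (β0 - βo)) := by
            ring

end RGSAux

/-- Randomized Gauss–Seidel for ridge regression with m > n converges linearly: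
E‖β_t − β°‖²_{XᵀX+λI} ≤ (1 − (σ₁² + λ)/(Σᵢ σᵢ² + nλ))ᵗ ‖β₀ − β°‖²_{XᵀX+λI},
where columns are chosen with probability (‖X_{(j)}‖² + λ)/(‖X‖_F² + nλ) and
σ₁ is the smallest singular value of X (Σᵢ σᵢ² = ‖X‖_F²). -/
theorem rgs_ridge_linear_convergence {m n : ℕ} (hmn : n < m)
    (X : Matrix (Fin m) (Fin n) ℝ) (y : Fin m → ℝ) (lam : ℝ) (hlam : 0 < lam)
    (σ1 : ℝ) (hσ1 : 0 ≤ σ1) (hσ : IsLeast (spectrum ℝ (Xᵀ * X)) (σ1 ^ 2))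
    (βo : Fin n → ℝ)
    (hβo : (Xᵀ * X + lam • (1 : Matrix (Fin n) (Fin n) ℝ)).mulVec βo = Xᵀ.mulVec y)
    (β0 : Fin n → ℝ) (t : ℕ) :
    ∑ js : Fin t → Fin n,
        (∏ s, (((∑ i, (X i (js s)) ^ 2) + lam) / ((∑ i, ∑ j, (X i j) ^ 2) + n * lam))) *
          ((rgsIter X y lam (List.ofFn js) β0 - βo) ⬝ᵥ
            (Xᵀ * X + lam • (1 : Matrix (Fin n) (Fin n) ℝ)).mulVec
              (rgsIter X y lam (List.ofFn js) β0 - βo)) ≤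
      (1 - (σ1 ^ 2 + lam) / ((∑ i, ∑ j, (X i j) ^ 2) + n * lam)) ^ t *
        ((β0 - βo) ⬝ᵥ
          (Xᵀ * X + lam • (1 : Matrix (Fin n) (Fin n) ℝ)).mulVec (β0 - βo)) := by
  classical
  have hn : 0 < n := by
    rcases Nat.eq_zero_or_pos n with h | h
    · exfalso
      have h0 := hσ.1
      rw [spectrum.mem_iff] at h0
      subst h
      haveI : Subsingleton (Matrix (Fin 0) (Fin 0) ℝ) :=
        ⟨fun a b => Matrix.ext fun i _ => i.elim0⟩
      exact h0 (isUnit_of_subsingleton _)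
    · exact h
  have hB : (Xᵀ * X).IsHermitian := by
    rw [← conjTranspose_eq_transpose_of_trivial]
    exact isHermitian_conjTranspose_mul_self X
  have hμ_lb : ∀ i, σ1 ^ 2 ≤ hB.eigenvalues i :=
    fun i => hσ.2 (hB.eigenvalues_mem_spectrum_real i)
  have hpsd : (Xᵀ * X).PosSemidef := by
    rw [← conjTranspose_eq_transpose_of_trivial]
    exact posSemidef_conjTranspose_mul_self X
  have hμ_nn : ∀ i, 0 ≤ hB.eigenvalues i := fun i => hpsd.eigenvalues_nonneg i
  have hdiag : ∀ j, (Xᵀ * X + lam • (1 : Matrix (Fin n) (Fin n) ℝ)) j j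
      = (∑ i, (X i j) ^ 2) + lam := by
    intro j
    simp [Matrix.add_apply, Matrix.mul_apply, Matrix.smul_apply, Matrix.one_apply_eq, sq]
  have hdiag_pos : ∀ j, 0 < (Xᵀ * X + lam • (1 : Matrix (Fin n) (Fin n) ℝ)) j j := by
    intro j
    rw [hdiag j]
    have : (0:ℝ) ≤ ∑ i, (X i j) ^ 2 := by positivity
    linarith
  have htr : ∑ j, (Xᵀ * X) j j = ∑ i, ∑ j, (X i j) ^ 2 := by
    rw [Finset.sum_comm]
    refine Finset.sum_congr rfl fun j _ => ?_
    simp [Matrix.mul_apply, sq]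
  have hT0 : (0:ℝ) ≤ ∑ i, ∑ j, (X i j) ^ 2 := by positivity
  have hTpos : 0 < (∑ i, ∑ j, (X i j) ^ 2) + (n:ℝ) * lam := by
    have : (0:ℝ) < (n:ℝ) * lam := mul_pos (by exact_mod_cast hn) hlam
    linarith
  have hsum_diag : ∑ j, (Xᵀ * X + lam • (1 : Matrix (Fin n) (Fin n) ℝ)) j j
      = (∑ i, ∑ j, (X i j) ^ 2) + (n:ℝ) * lam := by
    calc ∑ j, (Xᵀ * X + lam • (1 : Matrix (Fin n) (Fin n) ℝ)) j j
        = ∑ j, ((Xᵀ * X) j j + lam) := by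
          refine Finset.sum_congr rfl fun j _ => ?_
          simp [Matrix.add_apply, Matrix.smul_apply, Matrix.one_apply_eq]
      _ = (∑ j, (Xᵀ * X) j j) + (n:ℝ) * lam := by
          rw [Finset.sum_add_distrib, Finset.sum_const, Finset.card_univ, Fintype.card_fin,
            nsmul_eq_mul]
      _ = (∑ i, ∑ j, (X i j) ^ 2) + (n:ℝ) * lam := by rw [htr]
  have hsymm : (Xᵀ * X + lam • (1 : Matrix (Fin n) (Fin n) ℝ))ᵀ
      = Xᵀ * X + lam • (1 : Matrix (Fin n) (Fin n) ℝ) := by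
    rw [transpose_add, transpose_mul, transpose_transpose, transpose_smul, transpose_one]
  have hfrob : σ1 ^ 2 + lam ≤ (∑ i, ∑ j, (X i j) ^ 2) + (n:ℝ) * lam := by
    have h1 : σ1 ^ 2 ≤ ∑ i, hB.eigenvalues i :=
      le_trans (hμ_lb ⟨0, hn⟩) (Finset.single_le_sum (fun i _ => hμ_nn i) (Finset.mem_univ _))
    have h2 := rgs_sum_eigenvalues_eq _ hB
    have h4 : lam ≤ (n:ℝ) * lam := le_mul_of_one_le_left hlam.le (by exact_mod_cast hn)
    linarith [h1, h2, htr, h4]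
  have hq : 0 ≤ 1 - (σ1 ^ 2 + lam) / ((∑ i, ∑ j, (X i j) ^ 2) + (n:ℝ) * lam) := by
    rw [sub_nonneg]
    exact div_le_one_of_le₀ hfrob hTpos.le
  have hp : ∀ j : Fin n,
      0 ≤ ((∑ i, (X i j) ^ 2) + lam) / ((∑ i, ∑ j, (X i j) ^ 2) + (n:ℝ) * lam) := by
    intro j
    have h1 : (0:ℝ) ≤ ∑ i, (X i j) ^ 2 := by positivity
    have h2 : (0:ℝ) ≤ (∑ i, (X i j) ^ 2) + lam := by linarith
    exact div_nonneg h2 hTpos.le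
  -- the error update identity
  have hupd : ∀ (β : Fin n → ℝ) (j : Fin n),
      rgsUpdate X y lam j β - βo
        = (β - βo) -
          ((((Xᵀ * X + lam • (1 : Matrix (Fin n) (Fin n) ℝ)) *ᵥ (β - βo)) j)
              / ((Xᵀ * X + lam • (1 : Matrix (Fin n) (Fin n) ℝ)) j j)) •
            (Pi.single j 1 : Fin n → ℝ) := by
    intro β j
    have hnum : (Xᵀ *ᵥ (y - X *ᵥ β)) j - lam * β j
        = -(((Xᵀ * X + lam • (1 : Matrix (Fin n) (Fin n) ℝ)) *ᵥ (β - βo)) j) := by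
      have h1 : (Xᵀ * X + lam • (1 : Matrix (Fin n) (Fin n) ℝ)) *ᵥ (β - βo)
          = (Xᵀ * X + lam • (1 : Matrix (Fin n) (Fin n) ℝ)) *ᵥ β - Xᵀ *ᵥ y := by
        rw [mulVec_sub, hβo]
      rw [h1]
      simp only [add_mulVec, smul_mulVec, one_mulVec, mulVec_sub, ← mulVec_mulVec,
        Pi.sub_apply, Pi.add_apply, Pi.smul_apply, smul_eq_mul]
      ring
    funext k
    by_cases hk : k = j
    · subst hk
      simp only [rgsUpdate, Pi.sub_apply, Function.update_self, Pi.smul_apply,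
        Pi.single_eq_same, smul_eq_mul, mul_one]
      rw [← hdiag k, hnum]
      ring
    · simp only [rgsUpdate, Pi.sub_apply, Function.update_of_ne hk, Pi.smul_apply,
        Pi.single_eq_of_ne hk, smul_eq_mul, mul_zero, sub_zero]
  -- quadratic decrease per update
  have hquad_upd : ∀ (β : Fin n → ℝ) (j : Fin n),
      (rgsUpdate X y lam j β - βo) ⬝ᵥ
          (Xᵀ * X + lam • (1 : Matrix (Fin n) (Fin n) ℝ)) *ᵥ (rgsUpdate X y lam j β - βo)
        = (β - βo) ⬝ᵥ (Xᵀ * X + lam • (1 : Matrix (Fin n) (Fin n) ℝ)) *ᵥ (β - βo)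
          - (((Xᵀ * X + lam • (1 : Matrix (Fin n) (Fin n) ℝ)) *ᵥ (β - βo)) j) ^ 2
              / ((Xᵀ * X + lam • (1 : Matrix (Fin n) (Fin n) ℝ)) j j) := by
    intro β j
    rw [hupd β j, rgs_quad_sub_single _ hsymm]
    have h := (hdiag_pos j).ne'
    set d := (Xᵀ * X + lam • (1 : Matrix (Fin n) (Fin n) ℝ)) j j with hd
    set s := ((Xᵀ * X + lam • (1 : Matrix (Fin n) (Fin n) ℝ)) *ᵥ (β - βo)) j with hs
    field_simp
    ring
  -- one-step expected decrease
  have hexp : ∀ β : Fin n → ℝ,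
      ∑ j, (((∑ i, (X i j) ^ 2) + lam) / ((∑ i, ∑ j, (X i j) ^ 2) + (n:ℝ) * lam)) *
          ((rgsUpdate X y lam j β - βo) ⬝ᵥ
            (Xᵀ * X + lam • (1 : Matrix (Fin n) (Fin n) ℝ)).mulVec (rgsUpdate X y lam j β - βo))
        ≤ (1 - (σ1 ^ 2 + lam) / ((∑ i, ∑ j, (X i j) ^ 2) + (n:ℝ) * lam)) *
            ((β - βo) ⬝ᵥ
              (Xᵀ * X + lam • (1 : Matrix (Fin n) (Fin n) ℝ)).mulVec (β - βo)) := by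
    intro β
    have hQ : 0 ≤ (β - βo) ⬝ᵥ (Xᵀ * X + lam • (1 : Matrix (Fin n) (Fin n) ℝ)) *ᵥ (β - βo) :=
      rgs_quad_nonneg X lam hlam.le (β - βo)
    have hAe := rgs_quad_bound (Xᵀ * X) hB lam (σ1 ^ 2 + lam) (by positivity)
      (fun i => by have := hμ_lb i; linarith) (β - βo)
    have h1 : ∑ j, (((∑ i, (X i j) ^ 2) + lam) / ((∑ i, ∑ j, (X i j) ^ 2) + (n:ℝ) * lam)) *
          ((rgsUpdate X y lam j β - βo) ⬝ᵥ
            (Xᵀ * X + lam • (1 : Matrix (Fin n) (Fin n) ℝ)).mulVec (rgsUpdate X y lam j β - βo))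
        = ((β - βo) ⬝ᵥ (Xᵀ * X + lam • (1 : Matrix (Fin n) (Fin n) ℝ)) *ᵥ (β - βo))
          - (((Xᵀ * X + lam • (1 : Matrix (Fin n) (Fin n) ℝ)) *ᵥ (β - βo))
              ⬝ᵥ ((Xᵀ * X + lam • (1 : Matrix (Fin n) (Fin n) ℝ)) *ᵥ (β - βo)))
            / ((∑ i, ∑ j, (X i j) ^ 2) + (n:ℝ) * lam) := by
      have hstep : ∀ j ∈ Finset.univ,
          (((∑ i, (X i j) ^ 2) + lam) / ((∑ i, ∑ j, (X i j) ^ 2) + (n:ℝ) * lam)) *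
            ((rgsUpdate X y lam j β - βo) ⬝ᵥ
              (Xᵀ * X + lam • (1 : Matrix (Fin n) (Fin n) ℝ)).mulVec (rgsUpdate X y lam j β - βo))
          = ((Xᵀ * X + lam • (1 : Matrix (Fin n) (Fin n) ℝ)) j j) *
              ((β - βo) ⬝ᵥ (Xᵀ * X + lam • (1 : Matrix (Fin n) (Fin n) ℝ)) *ᵥ (β - βo))
                / ((∑ i, ∑ j, (X i j) ^ 2) + (n:ℝ) * lam)
            - (((Xᵀ * X + lam • (1 : Matrix (Fin n) (Fin n) ℝ)) *ᵥ (β - βo)) j) ^ 2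
                / ((∑ i, ∑ j, (X i j) ^ 2) + (n:ℝ) * lam) := by
        intro j _
        rw [hquad_upd β j, ← hdiag j]
        have h := (hdiag_pos j).ne'
        have hT := hTpos.ne'
        set T := (∑ i, ∑ j, (X i j) ^ 2) + (n:ℝ) * lam with hTd
        set d := (Xᵀ * X + lam • (1 : Matrix (Fin n) (Fin n) ℝ)) j j with hd
        set s := ((Xᵀ * X + lam • (1 : Matrix (Fin n) (Fin n) ℝ)) *ᵥ (β - βo)) j with hs
        set Q := (β - βo) ⬝ᵥ (Xᵀ * X + lam • (1 : Matrix (Fin n) (Fin n) ℝ)) *ᵥ (β - βo) with hQd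
        field_simp
      rw [Finset.sum_congr rfl hstep, Finset.sum_sub_distrib, ← Finset.sum_div, ← Finset.sum_div,
        ← Finset.sum_mul, hsum_diag]
      have hdot : ((Xᵀ * X + lam • (1 : Matrix (Fin n) (Fin n) ℝ)) *ᵥ (β - βo))
            ⬝ᵥ ((Xᵀ * X + lam • (1 : Matrix (Fin n) (Fin n) ℝ)) *ᵥ (β - βo))
          = ∑ j, (((Xᵀ * X + lam • (1 : Matrix (Fin n) (Fin n) ℝ)) *ᵥ (β - βo)) j) ^ 2 := by
        simp [dotProduct, sq]
      rw [hdot]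
      field_simp
    rw [h1]
    have h3 : (σ1 ^ 2 + lam) *
          ((β - βo) ⬝ᵥ (Xᵀ * X + lam • (1 : Matrix (Fin n) (Fin n) ℝ)) *ᵥ (β - βo))
            / ((∑ i, ∑ j, (X i j) ^ 2) + (n:ℝ) * lam)
        ≤ (((Xᵀ * X + lam • (1 : Matrix (Fin n) (Fin n) ℝ)) *ᵥ (β - βo))
            ⬝ᵥ ((Xᵀ * X + lam • (1 : Matrix (Fin n) (Fin n) ℝ)) *ᵥ (β - βo)))
          / ((∑ i, ∑ j, (X i j) ^ 2) + (n:ℝ) * lam) := by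
      gcongr
    have hexpand : (1 - (σ1 ^ 2 + lam) / ((∑ i, ∑ j, (X i j) ^ 2) + (n:ℝ) * lam)) *
          ((β - βo) ⬝ᵥ (Xᵀ * X + lam • (1 : Matrix (Fin n) (Fin n) ℝ)) *ᵥ (β - βo))
        = ((β - βo) ⬝ᵥ (Xᵀ * X + lam • (1 : Matrix (Fin n) (Fin n) ℝ)) *ᵥ (β - βo))
          - (σ1 ^ 2 + lam) *
              ((β - βo) ⬝ᵥ (Xᵀ * X + lam • (1 : Matrix (Fin n) (Fin n) ℝ)) *ᵥ (β - βo))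
                / ((∑ i, ∑ j, (X i j) ^ 2) + (n:ℝ) * lam) := by
      ring
    rw [hexpand]
    linarith
  exact rgs_main X y lam βo ((∑ i, ∑ j, (X i j) ^ 2) + (n:ℝ) * lam)
    (1 - (σ1 ^ 2 + lam) / ((∑ i, ∑ j, (X i j) ^ 2) + (n:ℝ) * lam)) hp hq hexp β0 t
end

section
/- The RGS update for ridge regression preserves the normal-equation orthogonality: if β⁺ differs from β only in coordinate j with β⁺_j = β_j + (X_{(j)}*(y − Xβ) − λβ_j)/(‖X_{(j)}‖² + λ), and (X*X + λI)β° = X*y, then (β⁺ − β)*(X*X + λI)(β⁺ − β°) = 0. -/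
open Matrix

/-- The RGS update for ridge regression preserves the normal-equation orthogonality:
(β⁺ − β)ᵀ(XᵀX + λI)(β⁺ − β°) = 0. -/
theorem rgs_update_orthogonality {m n : ℕ} (X : Matrix (Fin m) (Fin n) ℝ)
    (y : Fin m → ℝ) (lam : ℝ) (hlam : 0 < lam) (β βo : Fin n → ℝ)
    (hβo : (Xᵀ * X + lam • (1 : Matrix (Fin n) (Fin n) ℝ)).mulVec βo = Xᵀ.mulVec y)
    (j : Fin n) (βp : Fin n → ℝ)
    (hβp : βp = Function.update β j
      (β j + ((Xᵀ.mulVec (y - X.mulVec β)) j - lam * β j) / ((∑ i, (X i j) ^ 2) + lam))) :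
    (βp - β) ⬝ᵥ (Xᵀ * X + lam • (1 : Matrix (Fin n) (Fin n) ℝ)).mulVec (βp - βo) = 0 := by
  have hd : (0:ℝ) < (∑ i, (X i j) ^ 2) + lam :=
    add_pos_of_nonneg_of_pos (Finset.sum_nonneg fun i _ => sq_nonneg _) hlam
  set d : ℝ := ∑ i, (X i j) ^ 2 with hdd
  set c : ℝ := ((Xᵀ.mulVec (y - X.mulVec β)) j - lam * β j) / (d + lam) with hc
  have hdiff : βp - β = Pi.single j c := by
    funext i
    by_cases h : i = j
    · subst h; simp [hβp]
    · simp [hβp, Function.update_of_ne h, Pi.single_eq_of_ne h]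
  have hβp' : βp = β + Pi.single j c := by
    rw [← hdiff]; abel
  set A : Matrix (Fin n) (Fin n) ℝ := Xᵀ * X + lam • (1 : Matrix (Fin n) (Fin n) ℝ) with hA
  rw [hdiff, single_dotProduct]
  have h1 : A.mulVec (βp - βo) = A.mulVec β + A.mulVec (Pi.single j c) - Xᵀ.mulVec y := by
    rw [Matrix.mulVec_sub, hβo, hβp', Matrix.mulVec_add]
  rw [h1]
  have hAjj : A j j = d + lam := by
    simp [hA, Matrix.add_apply, Matrix.mul_apply, Matrix.one_apply, hdd, sq]
  have h2 : (A.mulVec β) j = ((Xᵀ * X).mulVec β) j + lam * β j := by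
    simp [hA, Matrix.add_mulVec, Matrix.smul_mulVec]
  have h3 : (Xᵀ.mulVec (y - X.mulVec β)) j = (Xᵀ.mulVec y) j - ((Xᵀ * X).mulVec β) j := by
    rw [Matrix.mulVec_sub, Matrix.mulVec_mulVec]; rfl
  have h4 : c * (d + lam) = (Xᵀ.mulVec y) j - ((Xᵀ * X).mulVec β) j - lam * β j := by
    rw [hc, h3, div_mul_cancel₀ _ (ne_of_gt hd)]
  simp only [Pi.add_apply, Pi.sub_apply, Matrix.mulVec_single, Pi.smul_apply, op_smul_eq_mul, Matrix.col_apply, hAjj, h2]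
  have key : ((Xᵀ * X) *ᵥ β) j + lam * β j + (d + lam) * c - (Xᵀ *ᵥ y) j = 0 := by
    linear_combination h4
  rw [key, mul_zero]
end

section
/- The eigenvalues of the augmented matrix A = [[√λ I_m, X],[X*, −√λ I_n]] all have absolute value √(σ² + λ) for some singular value σ of X (or equal ±√λ); consequently, the condition number of A equals the square root of the condition number of X*X + λI_n when m = n. -/
open Matrix

lemma mem_spectrum_iff_det {ι : Type*} [Fintype ι] [DecidableEq ι] (M : Matrix ι ι ℝ) (μ : ℝ) :
    μ ∈ spectrum ℝ M ↔ (μ • (1 : Matrix ι ι ℝ) - M).det = 0 := by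
  rw [spectrum.mem_iff, Algebra.algebraMap_eq_smul_one, Matrix.isUnit_iff_isUnit_det,
    isUnit_iff_ne_zero, not_ne_iff]

section Aux2
variable {m n : ℕ} (X : Matrix (Fin m) (Fin n) ℝ)

lemma det_swap_aux {t : ℝ} (ht : t ≠ 0)
    (h : (t • (1 : Matrix (Fin m) (Fin m) ℝ) - X * Xᵀ).det = 0) :
    (t • (1 : Matrix (Fin n) (Fin n) ℝ) - Xᵀ * X).det = 0 := by
  have h1 : t • (1 : Matrix (Fin m) (Fin m) ℝ) - X * Xᵀ
      = t • ((1 : Matrix (Fin m) (Fin m) ℝ) - (t⁻¹ • X) * Xᵀ) := by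
    rw [smul_sub, Matrix.smul_mul, smul_smul, mul_inv_cancel₀ ht, one_smul]
  have h2 : t • (1 : Matrix (Fin n) (Fin n) ℝ) - Xᵀ * X
      = t • ((1 : Matrix (Fin n) (Fin n) ℝ) - Xᵀ * (t⁻¹ • X)) := by
    rw [smul_sub, Matrix.mul_smul, smul_smul, mul_inv_cancel₀ ht, one_smul]
  rw [h1, det_smul] at h
  rw [h2, det_smul]
  have heq := Matrix.det_one_sub_mul_comm (t⁻¹ • X) Xᵀ
  rcases mul_eq_zero.mp h with h' | h'
  · exact absurd h' (pow_ne_zero _ ht)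
  · rw [← heq, h', mul_zero]

lemma spectrum_XtX_nonneg {t : ℝ} (h : t ∈ spectrum ℝ (Xᵀ * X)) : 0 ≤ t := by
  rw [mem_spectrum_iff_det] at h
  obtain ⟨v, hv, hMv⟩ := (Matrix.exists_mulVec_eq_zero_iff).mpr h
  have hXv : (Xᵀ * X) *ᵥ v = t • v := by
    rw [Matrix.sub_mulVec, sub_eq_zero] at hMv
    rw [← hMv, Matrix.smul_mulVec, Matrix.one_mulVec]
  have h1 : v ⬝ᵥ ((Xᵀ * X) *ᵥ v) = (X *ᵥ v) ⬝ᵥ (X *ᵥ v) := by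
    rw [← Matrix.mulVec_mulVec, Matrix.dotProduct_mulVec, Matrix.vecMul_transpose]
  have key : t * (v ⬝ᵥ v) = (X *ᵥ v) ⬝ᵥ (X *ᵥ v) := by
    rw [← h1, hXv]
    simp [dotProduct, Finset.mul_sum, mul_comm, mul_left_comm]
  have hnn : ∀ (k : ℕ) (w : Fin k → ℝ), 0 ≤ w ⬝ᵥ w := by
    intro k w
    simp only [dotProduct]
    exact Finset.sum_nonneg fun i _ => mul_self_nonneg _
  have hvv : 0 < v ⬝ᵥ v :=
    lt_of_le_of_ne (hnn _ v) fun h' => hv (dotProduct_self_eq_zero.mp h'.symm)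
  nlinarith [hnn _ (X *ᵥ v), key]

end Aux2

section Aux3
variable {m n : ℕ} (X : Matrix (Fin m) (Fin n) ℝ) (lam : ℝ)

noncomputable def augA : Matrix (Fin m ⊕ Fin n) (Fin m ⊕ Fin n) ℝ :=
  Matrix.fromBlocks (Real.sqrt lam • (1 : Matrix (Fin m) (Fin m) ℝ)) X
    Xᵀ (-(Real.sqrt lam) • (1 : Matrix (Fin n) (Fin n) ℝ))

lemma augA_sq (hlam : 0 ≤ lam) :
    augA X lam * augA X lam
      = Matrix.fromBlocks (lam • 1 + X * Xᵀ) 0 0 (Xᵀ * X + lam • 1) := by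
  have e11 : Real.sqrt lam • (1 : Matrix (Fin m) (Fin m) ℝ) * (Real.sqrt lam • 1) + X * Xᵀ
      = lam • 1 + X * Xᵀ := by
    rw [Matrix.smul_mul, Matrix.mul_smul, smul_smul, Matrix.one_mul, Real.mul_self_sqrt hlam]
  have e12 : Real.sqrt lam • (1 : Matrix (Fin m) (Fin m) ℝ) * X
      + X * (-Real.sqrt lam • (1 : Matrix (Fin n) (Fin n) ℝ)) = 0 := by
    rw [Matrix.smul_mul, Matrix.mul_smul, Matrix.one_mul, Matrix.mul_one, ← add_smul,
      add_neg_cancel, zero_smul]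
  have e21 : Xᵀ * (Real.sqrt lam • (1 : Matrix (Fin m) (Fin m) ℝ))
      + -Real.sqrt lam • (1 : Matrix (Fin n) (Fin n) ℝ) * Xᵀ = 0 := by
    rw [Matrix.smul_mul, Matrix.mul_smul, Matrix.one_mul, Matrix.mul_one, ← add_smul,
      add_neg_cancel, zero_smul]
  have e22 : Xᵀ * X + -Real.sqrt lam • (1 : Matrix (Fin n) (Fin n) ℝ)
      * (-Real.sqrt lam • 1) = Xᵀ * X + lam • 1 := by
    rw [Matrix.smul_mul, Matrix.mul_smul, smul_smul, Matrix.one_mul, neg_mul_neg,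
      Real.mul_self_sqrt hlam]
  rw [augA, Matrix.fromBlocks_multiply, e11, e12, e21, e22]

lemma det_fact (hlam : 0 ≤ lam) (μ : ℝ) :
    (μ • 1 - augA X lam).det * (μ • 1 + augA X lam).det
      = ((μ ^ 2 - lam) • (1 : Matrix (Fin m) (Fin m) ℝ) - X * Xᵀ).det *
        ((μ ^ 2 - lam) • (1 : Matrix (Fin n) (Fin n) ℝ) - Xᵀ * X).det := by
  set A := augA X lam with hA
  have h1 : (μ • 1 - A) * (μ • 1 + A) = (μ ^ 2) • 1 - A * A := by
    simp only [sub_mul, mul_add, Matrix.smul_mul, Matrix.mul_smul, Matrix.one_mul,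
      Matrix.mul_one, smul_smul, ← pow_two, smul_pow, one_pow]
    abel
  have h2 : (μ ^ 2) • (1 : Matrix (Fin m ⊕ Fin n) (Fin m ⊕ Fin n) ℝ) - A * A
      = Matrix.fromBlocks ((μ ^ 2 - lam) • 1 - X * Xᵀ) 0 0 ((μ ^ 2 - lam) • 1 - Xᵀ * X) := by
    have hb1 : (μ ^ 2) • (1 : Matrix (Fin m) (Fin m) ℝ) - (lam • 1 + X * Xᵀ)
        = (μ ^ 2 - lam) • 1 - X * Xᵀ := by rw [sub_smul]; abel
    have hb2 : (μ ^ 2) • (1 : Matrix (Fin n) (Fin n) ℝ) - (Xᵀ * X + lam • 1)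
        = (μ ^ 2 - lam) • 1 - Xᵀ * X := by rw [sub_smul]; abel
    rw [hA, augA_sq X lam hlam, ← Matrix.fromBlocks_one, Matrix.fromBlocks_smul,
      sub_eq_add_neg, Matrix.fromBlocks_neg, Matrix.fromBlocks_add, ← hb1, ← hb2]
    simp only [smul_zero, add_zero, neg_zero, zero_add, sub_eq_add_neg]
  rw [← Matrix.det_mul, h1, h2, Matrix.det_fromBlocks_zero₁₂]

end Aux3

lemma det_swap_sq {k : ℕ} (X : Matrix (Fin k) (Fin k) ℝ) {t : ℝ}
    (h : (t • (1 : Matrix (Fin k) (Fin k) ℝ) - X * Xᵀ).det = 0) :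
    (t • (1 : Matrix (Fin k) (Fin k) ℝ) - Xᵀ * X).det = 0 := by
  by_cases ht : t = 0
  · subst ht
    simp only [zero_smul, zero_sub, Matrix.det_neg, Matrix.det_mul] at h ⊢
    rcases mul_eq_zero.mp h with h' | h'
    · exact absurd h' (pow_ne_zero _ (by norm_num))
    · rw [mul_comm] at h'; rw [h', mul_zero]
  · exact det_swap_aux X ht h

/-- Every eigenvalue μ of the augmented matrix A = [[√λ I, X],[Xᵀ, −√λ I]] satisfies
μ² = σ² + λ for some singular value σ of X (i.e. μ² − λ is an eigenvalue of XᵀX) or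
μ² = λ; consequently, when m = n the condition number of A (ratio of largest to
smallest absolute eigenvalue) is the square root of the condition number of XᵀX + λI. -/
theorem augmented_matrix_eigenvalues {m n : ℕ} (X : Matrix (Fin m) (Fin n) ℝ)
    (lam : ℝ) (hlam : 0 < lam) :
    (∀ μ ∈ spectrum ℝ
        (Matrix.fromBlocks (Real.sqrt lam • (1 : Matrix (Fin m) (Fin m) ℝ)) X
          Xᵀ (-(Real.sqrt lam) • (1 : Matrix (Fin n) (Fin n) ℝ))),
        μ ^ 2 - lam ∈ spectrum ℝ (Xᵀ * X) ∨ μ ^ 2 = lam) ∧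
    (m = n → ∀ a b c d : ℝ,
      IsGreatest {t : ℝ | ∃ μ ∈ spectrum ℝ
          (Matrix.fromBlocks (Real.sqrt lam • (1 : Matrix (Fin m) (Fin m) ℝ)) X
            Xᵀ (-(Real.sqrt lam) • (1 : Matrix (Fin n) (Fin n) ℝ))), t = |μ|} a →
      IsLeast {t : ℝ | ∃ μ ∈ spectrum ℝ
          (Matrix.fromBlocks (Real.sqrt lam • (1 : Matrix (Fin m) (Fin m) ℝ)) X
            Xᵀ (-(Real.sqrt lam) • (1 : Matrix (Fin n) (Fin n) ℝ))), t = |μ|} b →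
      IsGreatest (spectrum ℝ (Xᵀ * X + lam • (1 : Matrix (Fin n) (Fin n) ℝ))) c →
      IsLeast (spectrum ℝ (Xᵀ * X + lam • (1 : Matrix (Fin n) (Fin n) ℝ))) d →
      a / b = Real.sqrt (c / d)) := by
  have hAdef : Matrix.fromBlocks (Real.sqrt lam • (1 : Matrix (Fin m) (Fin m) ℝ)) X
      Xᵀ (-(Real.sqrt lam) • (1 : Matrix (Fin n) (Fin n) ℝ)) = augA X lam := rfl
  constructor
  · intro μ hμ
    rw [hAdef, mem_spectrum_iff_det] at hμ
    have hprod := det_fact X lam hlam.le μ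
    rw [hμ, zero_mul] at hprod
    rcases mul_eq_zero.mp hprod.symm with hP | hQ
    · by_cases h0 : μ ^ 2 - lam = 0
      · exact Or.inr (sub_eq_zero.mp h0)
      · exact Or.inl ((mem_spectrum_iff_det _ _).mpr (det_swap_aux X h0 hP))
    · exact Or.inl ((mem_spectrum_iff_det _ _).mpr hQ)
  · intro hmn
    subst hmn
    intro a b c d ha hb hc hd
    rw [hAdef] at ha hb
    -- membership in T rephrased
    have hT : ∀ x : ℝ, x ∈ spectrum ℝ (Xᵀ * X + lam • (1 : Matrix (Fin m) (Fin m) ℝ)) ↔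
        ((x - lam) • (1 : Matrix (Fin m) (Fin m) ℝ) - Xᵀ * X).det = 0 := by
      intro x
      rw [mem_spectrum_iff_det]
      have : x • (1 : Matrix (Fin m) (Fin m) ℝ) - (Xᵀ * X + lam • 1)
          = (x - lam) • 1 - Xᵀ * X := by rw [sub_smul]; abel
      rw [this]
    have claim1 : ∀ t ∈ {t : ℝ | ∃ μ ∈ spectrum ℝ (augA X lam), t = |μ|},
        0 ≤ t ∧ t ^ 2 ∈ spectrum ℝ (Xᵀ * X + lam • (1 : Matrix (Fin m) (Fin m) ℝ)) := by
      rintro t ⟨μ, hμ, rfl⟩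
      refine ⟨abs_nonneg μ, ?_⟩
      rw [mem_spectrum_iff_det] at hμ
      have hprod := det_fact X lam hlam.le μ
      rw [hμ, zero_mul] at hprod
      rw [hT, sq_abs]
      rcases mul_eq_zero.mp hprod.symm with hP | hQ
      · exact det_swap_sq X hP
      · exact hQ
    have claim2 : ∀ t ∈ spectrum ℝ (Xᵀ * X + lam • (1 : Matrix (Fin m) (Fin m) ℝ)),
        lam ≤ t ∧ Real.sqrt t ∈ {t : ℝ | ∃ μ ∈ spectrum ℝ (augA X lam), t = |μ|} := by
      intro t ht
      rw [hT] at ht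
      have htlam : lam ≤ t := by
        have := spectrum_XtX_nonneg X ((mem_spectrum_iff_det _ _).mpr ht)
        linarith
      have ht0 : 0 ≤ t := le_trans hlam.le htlam
      refine ⟨htlam, ?_⟩
      set μ := Real.sqrt t with hμdef
      have hμ2 : μ ^ 2 = t := Real.sq_sqrt ht0
      have hprod := det_fact X lam hlam.le μ
      rw [hμ2, ht, mul_zero] at hprod
      rcases mul_eq_zero.mp hprod with hP | hQ
      · exact ⟨μ, (mem_spectrum_iff_det _ _).mpr hP,
          (abs_of_nonneg (Real.sqrt_nonneg t)).symm⟩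
      · refine ⟨-μ, ?_, ?_⟩
        · rw [mem_spectrum_iff_det]
          have : (-μ) • (1 : Matrix (Fin m ⊕ Fin m) (Fin m ⊕ Fin m) ℝ) - augA X lam
              = -(μ • 1 + augA X lam) := by rw [neg_smul]; abel
          rw [this, Matrix.det_neg, hQ, mul_zero]
        · rw [abs_neg, abs_of_nonneg (Real.sqrt_nonneg t)]
    -- a = sqrt c
    have hc0 : 0 ≤ c := le_trans hlam.le (claim2 c hc.1).1
    have hd0 : 0 < d := lt_of_lt_of_le hlam (claim2 d hd.1).1
    have ha0 : 0 ≤ a := (claim1 a ha.1).1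
    have hb0 : 0 ≤ b := (claim1 b hb.1).1
    have hac : a = Real.sqrt c := by
      refine le_antisymm ?_ (ha.2 (claim2 c hc.1).2)
      have h1 : a ^ 2 ≤ c := hc.2 (claim1 a ha.1).2
      calc a = Real.sqrt (a ^ 2) := (Real.sqrt_sq ha0).symm
        _ ≤ Real.sqrt c := Real.sqrt_le_sqrt h1
    have hbd : b = Real.sqrt d := by
      refine le_antisymm (hb.2 (claim2 d hd.1).2) ?_
      have h1 : d ≤ b ^ 2 := hd.2 (claim1 b hb.1).2
      calc Real.sqrt d ≤ Real.sqrt (b ^ 2) := Real.sqrt_le_sqrt h1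
        _ = b := Real.sqrt_sq hb0
    rw [hac, hbd, ← Real.sqrt_div hc0]
end
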